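/- Suppose in addition that ∫ : Ω^k → ℂ is a closed graded trace: ∫ ω_1 ω_2 = (−1)^{j(k−j)} ∫ ω_2 ω_1 for ω_1 ∈ Ω^j, ω_2 ∈ Ω^{k−j}, and ∫ dω = 0 for ω ∈ Ω^{k−1}. Define Φ(T) = ∫ T_{11} − (−1)^m ∫ T_{22} θ for T homogeneous of degree m = k. Then Φ is a closed graded trace on (˜Ω, *, δ): Φ(δS) = 0 for every S homogeneous of degree k−1, and Φ(T * T') = (−1)^{m m'} Φ(T' * T) for all homogeneous T, T' of degrees m, m' with m + m' = k. -/
import Mathlib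


namespace XTrick

/-- The data entering Connes' `X`-trick: a nonnegatively graded unital complex
algebra `Ω = ⊕_{j≥0} Ω^j` (graded by submodules `G j`, with `G j = 0` for
`j < 0`), a degree-one map `d` satisfying the graded Leibniz rule, and a
curvature `θ ∈ Ω²` with `dθ = 0` and `d²ω = θω − ωθ`. -/
structure XData (Ω : Type*) [Ring Ω] [Algebra ℂ Ω] : Type _ where
  /-- the grading `G j = Ω^j` -/
  G : ℤ → Submodule ℂ Ω
  neg_bot : ∀ j : ℤ, j < 0 → G j = ⊥
  one_mem : (1 : Ω) ∈ G 0
  mul_mem : ∀ {j j' : ℤ} {x y : Ω}, x ∈ G j → y ∈ G j' → x * y ∈ G (j + j')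
  /-- the degree-one map `d` -/
  d : Ω →ₗ[ℂ] Ω
  d_mem : ∀ {j : ℤ} {x : Ω}, x ∈ G j → d x ∈ G (j + 1)
  leibniz : ∀ {j : ℤ} {x : Ω}, x ∈ G j → ∀ y : Ω,
    d (x * y) = d x * y + ((-1 : ℂ) ^ j) • (x * d y)
  /-- the curvature `θ` -/
  theta : Ω
  theta_mem : theta ∈ G 2
  d_theta : d theta = 0
  d_sq : ∀ x : Ω, d (d x) = theta * x - x * theta

noncomputable section

variable {Ω : Type*} [Ring Ω] [Algebra ℂ Ω]

/-- The matrix `Θ = diag(1, θ)`. -/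
def XData.ThetaM (D : XData Ω) : Matrix (Fin 2) (Fin 2) Ω :=
  !![1, 0; 0, D.theta]

/-- The product `T * T' = T Θ T'` on `˜Ω = M₂(Ω)`. -/
def XData.starMul (D : XData Ω) (T T' : Matrix (Fin 2) (Fin 2) Ω) :
    Matrix (Fin 2) (Fin 2) Ω :=
  T * D.ThetaM * T'

/-- `T ∈ ˜Ω` is homogeneous of degree `m`:
`T₁₁ ∈ Ω^m`, `T₁₂, T₂₁ ∈ Ω^{m−1}`, `T₂₂ ∈ Ω^{m−2}`. -/
def XData.Homog (D : XData Ω) (m : ℤ) (T : Matrix (Fin 2) (Fin 2) Ω) : Prop :=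
  T 0 0 ∈ D.G m ∧ T 0 1 ∈ D.G (m - 1) ∧ T 1 0 ∈ D.G (m - 1) ∧ T 1 1 ∈ D.G (m - 2)

/-- The `X`-trick differential `δ` on elements of degree `m`. -/
def XData.deltaOp (D : XData Ω) (m : ℤ) (T : Matrix (Fin 2) (Fin 2) Ω) :
    Matrix (Fin 2) (Fin 2) Ω :=
  !![D.d (T 0 0), D.d (T 0 1); -(D.d (T 1 0)), -(D.d (T 1 1))] +
    !![0, -D.theta; 1, 0] * T +
    ((-1 : ℂ) ^ m) • (T * !![0, 1; -D.theta, 0])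

/-- The functional `Φ(T) = ∫ T₁₁ − (−1)ᵏ ∫ T₂₂ θ` on degree-`k` elements. -/
def XData.Phi (D : XData Ω) (intg : Ω →ₗ[ℂ] ℂ) (k : ℤ)
    (T : Matrix (Fin 2) (Fin 2) Ω) : ℂ :=
  intg (T 0 0) - ((-1 : ℂ) ^ k) * intg (T 1 1 * D.theta)


private lemma zadd (a b : ℤ) : ((-1:ℂ))^(a+b) = (-1:ℂ)^a * (-1:ℂ)^b :=
  zpow_add₀ (by norm_num) a b

private lemma zsq (a : ℤ) : ((-1:ℂ))^a * (-1:ℂ)^a = 1 := by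
  rw [← zadd]
  exact Even.neg_one_zpow ⟨a, rfl⟩

private lemma zsub1 (a : ℤ) : ((-1:ℂ))^(a-1) = -((-1:ℂ)^a) := by
  rw [show a - 1 = a + (-1) by ring, zadd]
  norm_num

private lemma zeven (a : ℤ) : ((-1:ℂ))^(2*(a:ℤ)) = 1 := Even.neg_one_zpow ⟨a, by ring⟩

private lemma zsign (p q : ℤ) :
    ((-1:ℂ))^((p-1)*(q+1)) = -((-1:ℂ)^(p*q) * (-1:ℂ)^(p+q)) := by
  have h1 : ((-1:ℂ))^(-(2*q)-1) = -1 := Odd.neg_one_zpow ⟨-q-1, by ring⟩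
  rw [show (p-1)*(q+1) = p*q + (p+q) + (-(2*q)-1) by ring, zadd, zadd, h1]
  ring

/-- if `∫` is a closed graded trace on `Ω` (in degree `k`), then
`Φ(T) = ∫ T₁₁ − (−1)^m ∫ T₂₂ θ` is a closed graded trace on `(˜Ω, *, δ)`. -/
theorem stmt16 (D : XData Ω) (k : ℤ) (intg : Ω →ₗ[ℂ] ℂ)
    (htrace : ∀ (j : ℤ) (x y : Ω), x ∈ D.G j → y ∈ D.G (k - j) →
      intg (x * y) = ((-1 : ℂ) ^ (j * (k - j))) * intg (y * x))
    (hclosed : ∀ x : Ω, x ∈ D.G (k - 1) → intg (D.d x) = 0) :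
    (∀ S : Matrix (Fin 2) (Fin 2) Ω, D.Homog (k - 1) S →
      D.Phi intg k (D.deltaOp (k - 1) S) = 0)
    ∧ (∀ (p q : ℤ) (T T' : Matrix (Fin 2) (Fin 2) Ω), p + q = k →
      D.Homog p T → D.Homog q T' →
      D.Phi intg k (D.starMul T T') =
        ((-1 : ℂ) ^ (p * q)) * D.Phi intg k (D.starMul T' T)) := by
  constructor
  · intro S hS
    obtain ⟨h00, h01, h10, h11⟩ := hS
    have f1 : intg (D.d (S 0 0)) = 0 := hclosed _ h00
    have h10' : S 1 0 ∈ D.G (k-2) := by rwa [show k-1-1 = k-2 by ring] at h10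
    have f2 := htrace 2 D.theta (S 1 0) D.theta_mem h10'
    rw [zeven, one_mul] at f2
    have hl := D.leibniz h11 D.theta
    rw [D.d_theta, mul_zero, smul_zero, add_zero] at hl
    have hmem : S 1 1 * D.theta ∈ D.G (k-1) := by
      have := D.mul_mem h11 D.theta_mem
      rwa [show k-1-2+2 = k-1 by ring] at this
    have f3 : intg (D.d (S 1 1) * D.theta) = 0 := by
      rw [← hl]; exact hclosed _ hmem
    have e00 : D.deltaOp (k-1) S 0 0 =
        D.d (S 0 0) + (-(D.theta * S 1 0)) + ((-1:ℂ)^(k-1)) • (-(S 0 1 * D.theta)) := by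
      simp [XData.deltaOp, Matrix.mul_apply, Fin.sum_univ_two, Matrix.vecMul, Matrix.vecHead, Matrix.vecTail, dotProduct]
    have e11 : D.deltaOp (k-1) S 1 1 * D.theta =
        -(D.d (S 1 1) * D.theta) + S 0 1 * D.theta + ((-1:ℂ)^(k-1)) • (S 1 0 * D.theta) := by
      have : D.deltaOp (k-1) S 1 1 =
          -(D.d (S 1 1)) + S 0 1 + ((-1:ℂ)^(k-1)) • (S 1 0) := by
        simp [XData.deltaOp, Matrix.mul_apply, Fin.sum_univ_two, Matrix.vecMul, Matrix.vecHead, Matrix.vecTail, dotProduct]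
      rw [this, add_mul, add_mul, neg_mul, smul_mul_assoc]
    rw [XData.Phi, e00, e11]
    simp only [map_add, map_neg, map_smul, smul_eq_mul, zsub1]
    linear_combination f1 - f2 + ((-1:ℂ)^k) * f3 + intg (S 1 0 * D.theta) * zsq k
  · intro p q T T' hpq hT hT'
    subst hpq
    obtain ⟨a00, a01, a10, a11⟩ := hT
    obtain ⟨b00, b01, b10, b11⟩ := hT'
    have sm00 : ∀ A B : Matrix (Fin 2) (Fin 2) Ω, D.starMul A B 0 0 =
        A 0 0 * B 0 0 + A 0 1 * (D.theta * B 1 0) := by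
      intro A B
      simp [XData.starMul, XData.ThetaM, Matrix.mul_apply, Fin.sum_univ_two, Matrix.vecMul, Matrix.vecHead, Matrix.vecTail, dotProduct, mul_assoc]
    have sm11 : ∀ A B : Matrix (Fin 2) (Fin 2) Ω, D.starMul A B 1 1 * D.theta =
        A 1 0 * (B 0 1 * D.theta) + (A 1 1 * D.theta) * (B 1 1 * D.theta) := by
      intro A B
      have : D.starMul A B 1 1 = A 1 0 * B 0 1 + A 1 1 * (D.theta * B 1 1) := by
        simp [XData.starMul, XData.ThetaM, Matrix.mul_apply, Fin.sum_univ_two, Matrix.vecMul, Matrix.vecHead, Matrix.vecTail, dotProduct, mul_assoc]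
      rw [this, add_mul]
      noncomm_ring
    have g1 : intg (T 0 0 * T' 0 0) = (-1:ℂ)^(p*q) * intg (T' 0 0 * T 0 0) := by
      have hm : T' 0 0 ∈ D.G (p+q-p) := by rwa [show p+q-p = q by ring]
      have := htrace p _ _ a00 hm
      rwa [show p*(p+q-p) = p*q by ring] at this
    have g2 : intg (T 0 1 * (D.theta * T' 1 0)) =
        -((-1:ℂ)^(p*q) * (-1:ℂ)^(p+q)) * intg (T' 1 0 * (T 0 1 * D.theta)) := by
      have hm : D.theta * T' 1 0 ∈ D.G (p+q-(p-1)) := by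
        have := D.mul_mem D.theta_mem b10
        rwa [show 2+(q-1) = p+q-(p-1) by ring] at this
      have h2 := htrace (p-1) _ _ a01 hm
      rw [show (p-1)*(p+q-(p-1)) = (p-1)*(q+1) by ring, zsign, mul_assoc] at h2
      have hm3 : T' 1 0 * T 0 1 ∈ D.G (p+q-2) := by
        have := D.mul_mem b10 a01
        rwa [show q-1+(p-1) = p+q-2 by ring] at this
      have h2b := htrace 2 D.theta _ D.theta_mem hm3
      rw [zeven, one_mul, mul_assoc] at h2b
      rw [h2b] at h2
      exact h2
    have g3 : intg (T 1 0 * (T' 0 1 * D.theta)) =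
        -((-1:ℂ)^(p*q) * (-1:ℂ)^(p+q)) * intg (T' 0 1 * (D.theta * T 1 0)) := by
      have hm : T' 0 1 * D.theta ∈ D.G (p+q-(p-1)) := by
        have := D.mul_mem b01 D.theta_mem
        rwa [show q-1+2 = p+q-(p-1) by ring] at this
      have h3 := htrace (p-1) _ _ a10 hm
      rw [show (p-1)*(p+q-(p-1)) = (p-1)*(q+1) by ring, zsign, mul_assoc] at h3
      exact h3
    have g4 : intg ((T 1 1 * D.theta) * (T' 1 1 * D.theta)) =
        (-1:ℂ)^(p*q) * intg ((T' 1 1 * D.theta) * (T 1 1 * D.theta)) := by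
      have hm1 : T 1 1 * D.theta ∈ D.G p := by
        have := D.mul_mem a11 D.theta_mem
        rwa [show p-2+2 = p by ring] at this
      have hm2 : T' 1 1 * D.theta ∈ D.G (p+q-p) := by
        have := D.mul_mem b11 D.theta_mem
        rwa [show q-2+2 = p+q-p by ring] at this
      have := htrace p _ _ hm1 hm2
      rwa [show p*(p+q-p) = p*q by ring] at this
    rw [XData.Phi, XData.Phi, sm00, sm11, sm00, sm11]
    simp only [map_add]
    linear_combination g1 + g2 - ((-1:ℂ)^(p+q)) * g3 - ((-1:ℂ)^(p+q)) * g4 +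
      ((-1:ℂ)^(p*q) * intg (T' 0 1 * (D.theta * T 1 0))) * zsq (p+q)


end

end XTrick
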